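/- Let f = (Ω_f, 𝓔_f, p_f) be a GPT fragment with finitely many convexly extremal states s₁,…,s_n and extremal effects e₁,…,e_m, and let D ∈ M_{m×n}(ℝ) with D_{j,i} = p_f(s_i, e_j). Let D = E·S be a rank factorization with k = rank(D). Define σ(s_i) := i-th column of S ∈ ℝᵏ and τ(e_j) := j-th row of E ∈ (ℝᵏ)*. Then the evaluation pairing reproduces the data: τ(e_j)(σ(s_i)) = p_f(s_i, e_j) for all i, j, and the evaluation pairing restricted to span{σ(s_i)} × span{τ(e_j)} is nondegenerate on both sides. -/
import Mathlib


open Matrix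

lemma aux_inj18 {m k : ℕ} (M : Matrix (Fin m) (Fin k) ℝ) (h : M.rank = k) :
    Function.Injective M.mulVecLin := by
  rw [← LinearMap.ker_eq_bot]
  have h1 := LinearMap.finrank_range_add_finrank_ker M.mulVecLin
  rw [Matrix.rank] at h
  rw [h] at h1
  simp [Module.finrank_fintype_fun_eq_card] at h1
  exact h1

/-- Theory-agnostic tomography outputs a shadow: given a rank factorization
D = A · B of the data table D_{j,i} = p_f(s_i, e_j), the reconstructed states
(columns of B) and effects (rows of A) reproduce the data under the evaluation
pairing, and this pairing is nondegenerate on the spans of the images. -/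
theorem stmt18
    {S E : Type*} [AddCommGroup S] [Module ℝ S] [FiniteDimensional ℝ S]
    [AddCommGroup E] [Module ℝ E] [FiniteDimensional ℝ E]
    (p : S →ₗ[ℝ] E →ₗ[ℝ] ℝ)
    (n m k : ℕ) (s : Fin n → S) (e : Fin m → E)
    (D : Matrix (Fin m) (Fin n) ℝ)
    (hD : ∀ (i : Fin n) (j : Fin m), D j i = p (s i) (e j))
    (A : Matrix (Fin m) (Fin k) ℝ) (B : Matrix (Fin k) (Fin n) ℝ)
    (hfact : D = A * B) (hrank : D.rank = k) :
    -- σ(s_i) := i-th column of B, τ(e_j) := j-th row of A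
    (∀ (i : Fin n) (j : Fin m),
      (∑ a, A j a * B a i) = p (s i) (e j)) ∧
    (∀ u : Fin k → ℝ,
      u ∈ Submodule.span ℝ (Set.range (fun i : Fin n => fun a => B a i)) →
      (∀ j : Fin m, (∑ a, A j a * u a) = 0) → u = 0) ∧
    (∀ v : Fin k → ℝ,
      v ∈ Submodule.span ℝ (Set.range (fun j : Fin m => fun a => A j a)) →
      (∀ i : Fin n, (∑ a, v a * B a i) = 0) → v = 0) := by
  have hAr : A.rank = k := le_antisymm (A.rank_le_width) (by
    calc k = D.rank := hrank.symm
    _ ≤ A.rank := by rw [hfact]; exact Matrix.rank_mul_le_left A B)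
  have hBr : Bᵀ.rank = k := by
    rw [Matrix.rank_transpose]
    exact le_antisymm (le_trans (Matrix.rank_le_card_height B) (by simp)) (by
      calc k = D.rank := hrank.symm
      _ ≤ B.rank := by rw [hfact]; exact Matrix.rank_mul_le_right A B)
  refine ⟨fun i j => by rw [← hD, hfact]; rfl, ?_, ?_⟩
  · intro u _ hu
    have : A.mulVecLin u = 0 := by
      funext j; exact hu j
    have := aux_inj18 A hAr (a₂ := 0) (by simpa using this)
    simpa using this
  · intro v _ hv
    have : Bᵀ.mulVecLin v = 0 := by
      funext i
      simpa [Matrix.mulVecLin, Matrix.mulVec, dotProduct, Matrix.transpose] using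
        (by simpa [mul_comm] using hv i : ∑ x : Fin k, B x i * v x = 0)
    have := aux_inj18 Bᵀ hBr (a₂ := 0) (by simpa using this)
    simpa using this
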